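/- Let μ be a Borel probability measure on ℝ with finite first absolute moment and a positive C¹ density p_μ, and set v_μ = p_μ'/p_μ. Suppose there exist a, R > 0 such that v_μ(x)·x ≥ −a x² for all |x| > R. Then inf_x K̄_μ(x) > 0, where K̄_μ(x) = (1/p_μ(x)) ∫_x^∞ (y − ⟨μ⟩) p_μ(y) dy and ⟨μ⟩ = ∫ y μ(dy). In particular, if ⟨μ⟩ = 0 then K̄_μ(x) ≥ 1/a for all x with |x| > R. -/

import Mathlib

open MeasureTheory Real Set Filter
open scoped ENNReal NNReal

/-- The weight `K̄_μ(x) = (1/p(x)) ∫_x^∞ (y − m) p(y) dy` built from a density `p` and a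
mean `m`. -/
noncomputable def Kbar (p : ℝ → ℝ) (m : ℝ) (x : ℝ) : ℝ :=
  (∫ y in Set.Ioi x, (y - m) * p y) / p x

-- FTC helper: ∫_{Ioi x} t * exp(-(a/2)*(t²-x²)) dt = 1/a
lemma integral_Ioi_y_exp {a : ℝ} (ha : 0 < a) (x : ℝ) :
    ∫ y in Ioi x, y * Real.exp (-(a/2) * (y^2 - x^2)) = 1/a := by
  have ha2 : 0 < a/2 := by linarith
  have hint : IntegrableOn (fun y : ℝ => y * Real.exp (-(a/2) * (y^2 - x^2))) (Ioi x) := by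
    have h1 : Integrable (fun y : ℝ => Real.exp ((a/2) * x^2) * (y * Real.exp (-(a/2) * y^2))) :=
      (integrable_mul_exp_neg_mul_sq ha2).const_mul _
    have : (fun y : ℝ => y * Real.exp (-(a/2) * (y^2 - x^2)))
        = fun y : ℝ => Real.exp ((a/2) * x^2) * (y * Real.exp (-(a/2) * y^2)) := by
      funext y
      rw [mul_comm (Real.exp _) _, mul_assoc, ← Real.exp_add]
      ring_nf
    rw [this]
    exact h1.integrableOn
  have hderiv : ∀ y ∈ Ici x, HasDerivAt (fun t : ℝ => -(1/a) * Real.exp (-(a/2) * (t^2 - x^2)))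
      (y * Real.exp (-(a/2) * (y^2 - x^2))) y := by
    intro y _
    have h1 : HasDerivAt (fun t : ℝ => -(a/2) * (t^2 - x^2)) (-(a/2) * (2*y)) y := by
      have := ((hasDerivAt_pow 2 y).sub_const (x^2)).const_mul (-(a/2))
      simpa using this
    have h2 := (h1.exp).const_mul (-(1/a))
    refine h2.congr_deriv ?_
    linear_combination (y * Real.exp (-(a/2) * (y^2 - x^2))) * mul_inv_cancel₀ ha.ne'
  have htend : Tendsto (fun t : ℝ => -(1/a) * Real.exp (-(a/2) * (t^2 - x^2))) atTop (nhds 0) := by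
    have h0 : Tendsto (fun t : ℝ => t^2 - x^2) atTop atTop :=
      tendsto_atTop_add_const_right atTop (-x^2) (tendsto_pow_atTop (by norm_num))
    have h1 : Tendsto (fun t : ℝ => -(a/2) * (t^2 - x^2)) atTop atBot :=
      h0.const_mul_atTop_of_neg (by linarith)
    have h2 : Tendsto (fun t : ℝ => Real.exp (-(a/2) * (t^2 - x^2))) atTop (nhds 0) :=
      Real.tendsto_exp_atBot.comp h1
    simpa using h2.const_mul (-(1/a))
  have := integral_Ioi_of_hasDerivAt_of_tendsto' hderiv hint htend
  rw [this]
  simp [Real.exp_zero]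

-- ∫_{Ioi x} exp(-c*(y-x)) = 1/c
lemma integral_Ioi_exp_lin {c : ℝ} (hc : 0 < c) (x : ℝ) :
    ∫ y in Ioi x, Real.exp (-c * (y - x)) = 1/c := by
  have hint : IntegrableOn (fun y : ℝ => Real.exp (-c * (y - x))) (Ioi x) := by
    have : (fun y : ℝ => Real.exp (-c * (y - x)))
        = fun y : ℝ => Real.exp (c * x) * Real.exp (-c * y) := by
      funext y; rw [← Real.exp_add]; ring_nf
    rw [this]
    exact (exp_neg_integrableOn_Ioi x hc).const_mul _
  have hderiv : ∀ y ∈ Ici x, HasDerivAt (fun t : ℝ => -(1/c) * Real.exp (-c * (t - x)))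
      (Real.exp (-c * (y - x))) y := by
    intro y _
    have h1 : HasDerivAt (fun t : ℝ => -c * (t - x)) (-c) y := by
      simpa using ((hasDerivAt_id y).sub_const x).const_mul (-c)
    have h2 := (h1.exp).const_mul (-(1/c))
    refine h2.congr_deriv ?_
    linear_combination (Real.exp (-c * (y - x))) * mul_inv_cancel₀ hc.ne'
  have htend : Tendsto (fun t : ℝ => -(1/c) * Real.exp (-c * (t - x))) atTop (nhds 0) := by
    have h1 : Tendsto (fun t : ℝ => -c * (t - x)) atTop atBot :=
      (tendsto_atTop_add_const_right atTop (-x) tendsto_id).const_mul_atTop_of_neg (by linarith)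
    have h2 : Tendsto (fun t : ℝ => Real.exp (-c * (t - x))) atTop (nhds 0) :=
      Real.tendsto_exp_atBot.comp h1
    simpa using h2.const_mul (-(1/c))
  have := integral_Ioi_of_hasDerivAt_of_tendsto' hderiv hint htend
  rw [this]
  simp

-- pointwise comparison: p y ≥ p x * exp(-(a/2)(y²-x²)) for R < x ≤ y
lemma tail_exp_lb (p : ℝ → ℝ) (hp : ContDiff ℝ 1 p) (hpos : ∀ x, 0 < p x)
    {a R : ℝ} (hcurv : ∀ t, R < t → -(a*t) ≤ deriv p t / p t)
    {x y : ℝ} (hx : R < x) (hxy : x ≤ y) :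
    p x * Real.exp (-(a/2) * (y^2 - x^2)) ≤ p y := by
  set D : ℝ → ℝ := fun t => Real.log (p t) + (a/2) * t^2 with hD
  have hDd : ∀ t, HasDerivAt D (deriv p t / p t + a * t) t := by
    intro t
    have h1 : HasDerivAt p (deriv p t) t :=
      ((hp.differentiable one_ne_zero) t).hasDerivAt
    have h2 : HasDerivAt (fun s => Real.log (p s)) (deriv p t / p t) t := h1.log (hpos t).ne'
    have h3 : HasDerivAt (fun s : ℝ => (a/2) * s^2) ((a/2) * (2*t)) t := by
      simpa using (hasDerivAt_pow 2 t).const_mul (a/2)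
    have := h2.add h3
    refine this.congr_deriv ?_
    ring
  have hmono : MonotoneOn D (Ici x) := by
    apply monotoneOn_of_deriv_nonneg (convex_Ici x)
    · exact fun t _ => ((hDd t).differentiableAt).continuousAt.continuousWithinAt
    · exact fun t _ => ((hDd t).differentiableAt).differentiableWithinAt
    · intro t ht
      rw [interior_Ici] at ht
      rw [(hDd t).deriv]
      have := hcurv t (lt_trans hx ht)
      linarith
  have hle : D x ≤ D y := hmono (show x ∈ Ici x from le_refl x) hxy hxy
  have : Real.log (p x) + (-(a/2) * (y^2 - x^2)) ≤ Real.log (p y) := by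
    simp only [hD] at hle; linarith
  calc p x * Real.exp (-(a/2) * (y^2 - x^2))
      = Real.exp (Real.log (p x) + (-(a/2) * (y^2 - x^2))) := by
        rw [Real.exp_add, Real.exp_log (hpos x)]
    _ ≤ Real.exp (Real.log (p y)) := Real.exp_le_exp.2 this
    _ = p y := Real.exp_log (hpos y)

-- core tail lower bound on the numerator
lemma tail_numerator_lb (p : ℝ → ℝ) (hp : ContDiff ℝ 1 p) (hpos : ∀ x, 0 < p x)
    {m a R : ℝ} (ha : 0 < a)
    (hcurv : ∀ t, R < t → -(a*t) ≤ deriv p t / p t)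
    (hint : Integrable (fun y => (y - m) * p y))
    {x : ℝ} (hx : R < x) (hx0 : 0 < x) (hxm : m ≤ x) :
    p x * (1/a - |m|/(a*x)) ≤ ∫ y in Ioi x, (y - m) * p y := by
  have ha2 : 0 < a/2 := by linarith
  set E : ℝ → ℝ := fun y => Real.exp (-(a/2) * (y^2 - x^2)) with hE
  have hEeq : E = fun y : ℝ => Real.exp ((a/2) * x^2) * Real.exp (-(a/2) * y^2) := by
    funext y; rw [hE, ← Real.exp_add]; ring_nf
  have hEint : IntegrableOn E (Ioi x) := by
    rw [hEeq]; exact ((integrable_exp_neg_mul_sq ha2).const_mul _).integrableOn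
  have hyEint : IntegrableOn (fun y => y * E y) (Ioi x) := by
    have : (fun y : ℝ => y * E y)
        = fun y : ℝ => Real.exp ((a/2) * x^2) * (y * Real.exp (-(a/2) * y^2)) := by
      funext y; rw [hEeq]; ring
    rw [this]
    exact ((integrable_mul_exp_neg_mul_sq ha2).const_mul _).integrableOn
  have hgeq : (fun y : ℝ => p x * ((y - m) * E y))
      = fun y : ℝ => p x * (y * E y - m * E y) := by funext y; ring
  have hgint : IntegrableOn (fun y : ℝ => p x * ((y - m) * E y)) (Ioi x) := by
    rw [hgeq]; exact ((hyEint.sub (hEint.const_mul m)).const_mul _)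
  -- step 1: pointwise comparison and monotonicity
  have step1 : (∫ y in Ioi x, p x * ((y - m) * E y)) ≤ ∫ y in Ioi x, (y - m) * p y := by
    apply setIntegral_mono_on hgint hint.integrableOn measurableSet_Ioi
    intro y hy
    have hxy : x ≤ y := le_of_lt hy
    have hym : 0 ≤ y - m := by linarith
    have hpb := tail_exp_lb p hp hpos hcurv hx hxy
    calc p x * ((y - m) * E y) = (y - m) * (p x * E y) := by ring
      _ ≤ (y - m) * p y := mul_le_mul_of_nonneg_left hpb hym
  -- step 2: compute the left integral
  set J : ℝ := ∫ y in Ioi x, E y with hJ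
  have hJ0 : 0 ≤ J := setIntegral_nonneg measurableSet_Ioi (fun y _ => Real.exp_nonneg _)
  have hJle : J ≤ 1/(a*x) := by
    have hmono : (∫ y in Ioi x, E y) ≤ ∫ y in Ioi x, Real.exp (-(a*x) * (y - x)) := by
      apply setIntegral_mono_on hEint _ measurableSet_Ioi
      · intro y hy
        have hxy : x ≤ y := le_of_lt hy
        apply Real.exp_le_exp.2
        nlinarith [sq_nonneg (y - x)]
      · have : (fun y : ℝ => Real.exp (-(a*x) * (y - x)))
            = fun y : ℝ => Real.exp (a*x*x) * Real.exp (-(a*x) * y) := by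
          funext y; rw [← Real.exp_add]; ring_nf
        rw [this]
        exact ((exp_neg_integrableOn_Ioi x (by positivity)).const_mul _)
    rw [integral_Ioi_exp_lin (by positivity) x] at hmono
    exact hmono
  have step2 : (∫ y in Ioi x, p x * ((y - m) * E y)) = p x * (1/a - m * J) := by
    rw [hgeq, MeasureTheory.integral_const_mul]
    congr 1
    have hsub : (∫ y in Ioi x, (y * E y - m * E y))
        = (∫ y in Ioi x, y * E y) - ∫ y in Ioi x, m * E y :=
      integral_sub hyEint (hEint.const_mul m)
    rw [hsub, MeasureTheory.integral_const_mul, integral_Ioi_y_exp ha x]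
  -- conclude
  have hmJ : m * J ≤ |m| / (a*x) := by
    calc m * J ≤ |m| * J := mul_le_mul_of_nonneg_right (le_abs_self m) hJ0
      _ ≤ |m| * (1/(a*x)) := mul_le_mul_of_nonneg_left hJle (abs_nonneg m)
      _ = |m| / (a*x) := by ring
  calc p x * (1/a - |m|/(a*x)) ≤ p x * (1/a - m * J) := by
        apply mul_le_mul_of_nonneg_left _ (hpos x).le
        linarith
    _ = ∫ y in Ioi x, p x * ((y - m) * E y) := step2.symm
    _ ≤ _ := step1

lemma tail_Kbar_lb (p : ℝ → ℝ) (hp : ContDiff ℝ 1 p) (hpos : ∀ x, 0 < p x)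
    {m a R : ℝ} (ha : 0 < a)
    (hcurv : ∀ t, R < t → -(a*t) ≤ deriv p t / p t)
    (hint : Integrable (fun y => (y - m) * p y))
    {x : ℝ} (hx : R < x) (hx0 : 0 < x) (hxm : m ≤ x) :
    1/a - |m|/(a*x) ≤ Kbar p m x := by
  have h := tail_numerator_lb p hp hpos ha hcurv hint hx hx0 hxm
  rw [Kbar, le_div_iff₀ (hpos x)]
  linarith [h, mul_comm (p x) (1/a - |m|/(a*x))]

lemma Kbar_reflect (p : ℝ → ℝ) (m : ℝ)
    (hint : Integrable (fun y => (y - m) * p y))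
    (htot : (∫ y, (y - m) * p y) = 0) (x : ℝ) :
    Kbar p m x = Kbar (fun u => p (-u)) (-m) (-x) := by
  unfold Kbar
  simp only [neg_neg]
  congr 1
  have h1 : (∫ u in Ioi (-x), (u - -m) * p (-u)) = ∫ y in Iic x, (-y - -m) * p y := by
    have := integral_comp_neg_Iic x (fun u => (u - -m) * p (-u))
    simp only [neg_neg] at this
    exact this.symm
  have h2 : (∫ y in Iic x, (-y - -m) * p y) = - ∫ y in Iic x, (y - m) * p y := by
    rw [← integral_neg]; congr 1; funext y; ring
  have h3 := intervalIntegral.integral_Iic_add_Ioi (hint.integrableOn (s := Iic x))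
    (hint.integrableOn (s := Ioi x))
  rw [htot] at h3
  rw [h1, h2]
  linarith

lemma continuous_G (f : ℝ → ℝ) (hint : Integrable f) :
    Continuous (fun x => ∫ y in Ioi x, f y) := by
  have h : (fun x => ∫ y in Ioi x, f y)
      = fun x => (∫ y, f y) - ((∫ y in Iic (0:ℝ), f y) + ∫ t in (0:ℝ)..x, f t) := by
    funext x
    have h1 := intervalIntegral.integral_Iic_add_Ioi (hint.integrableOn (s := Iic x))
      (hint.integrableOn (s := Ioi x))
    have h2 := intervalIntegral.integral_Iic_sub_Iic (hint.integrableOn (s := Iic 0))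
      (hint.integrableOn (s := Iic x))
    linarith
  rw [h]
  exact continuous_const.sub (continuous_const.add (hint.continuous_primitive 0))

lemma G_pos (p : ℝ → ℝ) (hpos : ∀ x, 0 < p x) (m : ℝ)
    (hint : Integrable (fun y => (y - m) * p y))
    (htot : (∫ y, (y - m) * p y) = 0) (x : ℝ) :
    0 < ∫ y in Ioi x, (y - m) * p y := by
  rcases le_or_gt m x with hmx | hmx
  · rw [setIntegral_pos_iff_support_of_nonneg_ae _ hint.integrableOn]
    · refine lt_of_lt_of_le ?_ (measure_mono
        (t := Function.support (fun y => (y - m) * p y) ∩ Ioi x) (fun y hy => ⟨?_, hy⟩))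
      · simp [Real.volume_Ioi]
      · have hy' : x < y := hy
        have : 0 < (y - m) * p y := mul_pos (by linarith) (hpos y)
        exact ne_of_gt this
    · refine (ae_restrict_iff' measurableSet_Ioi).2 (ae_of_all _ fun y hy => ?_)
      have hy' : x < y := hy
      exact le_of_lt (mul_pos (by linarith) (hpos y))
  · have h3 := intervalIntegral.integral_Iic_add_Ioi (hint.integrableOn (s := Iic x))
      (hint.integrableOn (s := Ioi x))
    rw [htot] at h3
    have h4 : (∫ y in Iic x, (y - m) * p y) < 0 := by
      have : 0 < ∫ y in Iic x, (m - y) * p y := by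
        rw [setIntegral_pos_iff_support_of_nonneg_ae]
        · refine lt_of_lt_of_le ?_ (measure_mono
            (t := Function.support (fun y => (m - y) * p y) ∩ Iic x) (fun y hy => ⟨?_, hy⟩))
          · simp [Real.volume_Iic]
          · have hy' : y ≤ x := hy
            exact ne_of_gt (mul_pos (by linarith) (hpos y))
        · refine (ae_restrict_iff' measurableSet_Iic).2 (ae_of_all _ fun y hy => ?_)
          have hy' : y ≤ x := hy
          exact le_of_lt (mul_pos (by linarith) (hpos y))
        · have : (fun y => (m - y) * p y) = fun y => -((y - m) * p y) := by funext y; ring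
          rw [this]
          exact hint.neg.integrableOn
      have heq : (∫ y in Iic x, (m - y) * p y) = - ∫ y in Iic x, (y - m) * p y := by
        rw [← integral_neg]; congr 1; funext y; ring
      linarith [heq ▸ this]
    linarith

lemma integrable_comp_neg' {f : ℝ → ℝ} (hf : Integrable f) : Integrable fun x => f (-x) := by
  have A : MeasurableEmbedding (fun x : ℝ => -x) :=
    (Homeomorph.neg ℝ).isClosedEmbedding.measurableEmbedding
  exact ((Measure.measurePreserving_neg volume).integrable_comp_emb A).2 hf

/-- Under the integral curvature condition `v_μ(x)·x ≥ −a x²` for `|x| > R`, the weight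
`K̄_μ` has a positive infimum; moreover, if the measure is centered, `K̄_μ(x) ≥ 1/a` for
`|x| > R`. -/
theorem Kbar_inf_pos_of_integral_curvature
    (μ : Measure ℝ) [IsProbabilityMeasure μ]
    (h_moment : Integrable (fun x : ℝ => x) μ)
    (p : ℝ → ℝ) (hp_C1 : ContDiff ℝ 1 p) (hp_pos : ∀ x, 0 < p x)
    (hp_dens : μ = volume.withDensity fun x => ENNReal.ofReal (p x))
    (a R : ℝ) (ha : 0 < a) (hR : 0 < R)
    (h_curv : ∀ x : ℝ, R < |x| → -(a * x ^ 2) ≤ (deriv p x / p x) * x) :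
    (∃ α > (0 : ℝ), ∀ x, α ≤ Kbar p (∫ y, y ∂μ) x) ∧
    ((∫ y, y ∂μ) = 0 → ∀ x : ℝ, R < |x| → 1 / a ≤ Kbar p 0 x) := by
  set m := ∫ y, y ∂μ with hm
  have hpc : Continuous p := hp_C1.continuous
  have hpm : Measurable fun x => ENNReal.ofReal (p x) :=
    ENNReal.measurable_ofReal.comp hpc.measurable
  have hfin : ∀ᵐ x ∂(volume : Measure ℝ), ENNReal.ofReal (p x) < ⊤ :=
    ae_of_all _ fun x => ENNReal.ofReal_lt_top
  have key : ∀ g : ℝ → ℝ, Integrable g μ ↔ Integrable (fun x => g x * p x) volume := by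
    intro g
    rw [hp_dens, integrable_withDensity_iff hpm hfin]
    have : (fun x => g x * (ENNReal.ofReal (p x)).toReal) = fun x => g x * p x := by
      funext x; rw [ENNReal.toReal_ofReal (hp_pos x).le]
    rw [this]
  have hp_int : Integrable p := by
    have h1 : Integrable (fun _ : ℝ => (1:ℝ)) μ := integrable_const 1
    have := (key _).1 h1
    simpa using this
  have hyp_int : Integrable (fun y => y * p y) := (key _).1 h_moment
  have hint_p1 : (∫ y, p y) = 1 := by
    have h1 : μ univ = 1 := measure_univ
    rw [hp_dens, withDensity_apply _ MeasurableSet.univ, Measure.restrict_univ] at h1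
    have h2 : (∫ y, p y) = (∫⁻ y, ENNReal.ofReal (p y)).toReal :=
      integral_eq_lintegral_of_nonneg_ae (ae_of_all _ fun x => (hp_pos x).le)
        hpc.aestronglyMeasurable
    rw [h2, h1]
    simp
  have hm_eq : m = ∫ y, y * p y := by
    rw [hm, hp_dens]
    have hcast : (fun x : ℝ => ENNReal.ofReal (p x)) = fun x => ((p x).toNNReal : ℝ≥0∞) := rfl
    rw [hcast]
    rw [integral_withDensity_eq_integral_smul (hpc.measurable.real_toNNReal) (fun y => y)]
    congr 1; funext y
    simp [NNReal.smul_def, Real.coe_toNNReal _ (hp_pos y).le, mul_comm]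
  have hint : Integrable (fun y => (y - m) * p y) := by
    have : (fun y => (y - m) * p y) = fun y => y * p y - m * p y := by funext y; ring
    rw [this]; exact hyp_int.sub (hp_int.const_mul m)
  have htot : (∫ y, (y - m) * p y) = 0 := by
    have h0 : (fun y => (y - m) * p y) = fun y => y * p y - m * p y := by funext y; ring
    rw [h0, integral_sub hyp_int (hp_int.const_mul m), MeasureTheory.integral_const_mul,
      hint_p1, ← hm_eq]
    ring
  have hcurvR : ∀ t, R < t → -(a*t) ≤ deriv p t / p t := by
    intro t ht
    have h0 : 0 < t := lt_trans hR ht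
    have h1 := h_curv t (by rwa [abs_of_pos h0])
    nlinarith [h1]
  -- reflected density
  set q : ℝ → ℝ := fun u => p (-u) with hq
  have hq_C1 : ContDiff ℝ 1 q := hp_C1.comp contDiff_neg
  have hq_pos : ∀ x, 0 < q x := fun x => hp_pos (-x)
  have hq_curvR : ∀ t, R < t → -(a*t) ≤ deriv q t / q t := by
    intro t ht
    have h0 : 0 < t := lt_trans hR ht
    have hd : deriv q t = -deriv p (-t) := deriv_comp_neg p t
    have h1 := h_curv (-t) (by rw [abs_neg, abs_of_pos h0]; exact ht)
    have hp0 : 0 < p (-t) := hp_pos (-t)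
    show -(a*t) ≤ deriv q t / q t
    rw [hd, hq]
    show -(a*t) ≤ -deriv p (-t) / p (-t)
    rw [neg_div]
    have h2 : deriv p (-t) / p (-t) ≤ a * t := by nlinarith [h1]
    linarith
  have hq_int : Integrable (fun u => (u - -m) * q u) := by
    have : (fun u => (u - -m) * q u) = fun u => -((fun y => (y - m) * p y) (-u)) := by
      funext u; simp only [hq]; ring
    rw [this]
    exact (integrable_comp_neg' hint).neg
  -- tail bounds
  have right_tail : ∀ x : ℝ, R < x → m ≤ x → 1/a - |m|/(a*x) ≤ Kbar p m x :=
    fun x hx hxm => tail_Kbar_lb p hp_C1 hp_pos ha hcurvR hint hx (lt_trans hR hx) hxm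
  have left_tail : ∀ x : ℝ, R < -x → -m ≤ -x → 1/a - |m|/(a*(-x)) ≤ Kbar p m x := by
    intro x hx hxm
    rw [Kbar_reflect p m hint htot x]
    have := tail_Kbar_lb q hq_C1 hq_pos ha hq_curvR hq_int hx (lt_trans hR hx) hxm
    rwa [abs_neg] at this
  constructor
  · -- part 1
    set M : ℝ := max (R+1) (2*|m|+1) with hM
    have hM0 : 0 < M := lt_of_lt_of_le (by linarith) (le_max_left _ _)
    have hMR : R < M := lt_of_lt_of_le (by linarith) (le_max_left _ _)
    have hMm : 2*|m|+1 ≤ M := le_max_right _ _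
    have htail : ∀ x : ℝ, M ≤ |x| → 1/(2*a) ≤ Kbar p m x := by
      intro x hx
      have hxpos : (0:ℝ) < |x| := lt_of_lt_of_le hM0 hx
      have habs : |m| / (a * |x|) ≤ 1/(2*a) := by
        rw [div_le_div_iff₀ (mul_pos ha hxpos) (by positivity)]
        have h2m : 2*|m| ≤ |x| := by
          have := abs_nonneg m; linarith [le_trans hMm hx]
        nlinarith [abs_nonneg m, ha]
      have hhalf : 1/a - 1/(2*a) = 1/(2*a) := by field_simp; ring
      rcases le_or_gt 0 x with hx0 | hx0
      · rw [abs_of_nonneg hx0] at hx habs hxpos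
        have h1 := right_tail x (lt_of_lt_of_le hMR hx)
          (by linarith [le_abs_self m, abs_nonneg m, le_trans hMm hx])
        linarith
      · rw [abs_of_neg hx0] at hx habs hxpos
        have h1 := left_tail x (lt_of_lt_of_le hMR hx)
          (by linarith [neg_le_abs m, abs_nonneg m, le_trans hMm hx])
        linarith
    -- continuity & compactness
    have contK : Continuous (Kbar p m) :=
      (continuous_G _ hint).div hpc (fun x => (hp_pos x).ne')
    obtain ⟨x₀, hx₀mem, hminOn⟩ := isCompact_Icc.exists_isMinOn
      (nonempty_Icc.2 (by linarith : -M ≤ M)) contK.continuousOn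
    have hK0 : 0 < Kbar p m x₀ :=
      div_pos (G_pos p hp_pos m hint htot x₀) (hp_pos x₀)
    refine ⟨min (Kbar p m x₀) (1/(2*a)), lt_min hK0 (by positivity), ?_⟩
    intro x
    rcases le_or_gt M |x| with hx | hx
    · exact le_trans (min_le_right _ _) (htail x hx)
    · have hxmem : x ∈ Icc (-M) M := by
        rw [mem_Icc]
        refine ⟨by linarith [neg_abs_le x], by linarith [le_abs_self x]⟩
      exact le_trans (min_le_left _ _) (hminOn hxmem)
  · -- part 2
    intro hm0 x hx
    rw [← hm] at *
    rw [hm0] at right_tail left_tail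
    rcases le_or_gt 0 x with hx0 | hx0
    · rw [abs_of_nonneg hx0] at hx
      have h1 := right_tail x hx (le_trans (by norm_num) (le_of_lt (lt_trans hR hx)))
      simpa using h1
    · rw [abs_of_neg hx0] at hx
      have h1 := left_tail x hx (by linarith [lt_trans hR hx])
      simpa using h1
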